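/- Let Π be a measurable space, let N ≥ 2 be an integer, and let α, β, δ ≥ 0 and γ > 0. For i = 1,…,N let g_i : Π → [0,∞) and d_i : Π → [0,∞) be bounded measurable functions (to be interpreted as the regret function π ↦ f^{M_i}(π_{M_i}) − f^{M_i}(π) and the information function π ↦ D_H²(M_i(π), M̄(π)) of a family of models M_1,…,M_N relative to a reference model M̄). Suppose there exist measurable functions u_i, v_i : Π → [0,1] with ∑_{i=1}^N u_i(π) ≤ N/2 and ∑_{i=1}^N v_i(π) ≤ 1 for every π ∈ Π, such that g_i(π) ≥ α·(1 − u_i(π)) and d_i(π) ≤ β·v_i(π) + δ for all i and all π. Then for every probability measure p on Π: max_{1≤i≤N} ∫ (g_i(π) − γ·d_i(π)) dp(π) ≥ α/2 − γ·(β/N + δ). -/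

import Mathlib

open MeasureTheory

/-- regret/information lower bound for an `(α,β,δ)`-family.
`g i` is the regret function of model `i` and `d i` its information
(squared Hellinger) function relative to the reference model. -/
theorem hard_family_lower_bound {X : Type*} [MeasurableSpace X] (N : ℕ) (hN : 2 ≤ N)
    (α β δ γ : ℝ) (hα : 0 ≤ α) (hβ : 0 ≤ β) (hδ : 0 ≤ δ) (hγ : 0 < γ)
    (g d u v : Fin N → X → ℝ)
    (hg_meas : ∀ i, Measurable (g i)) (hd_meas : ∀ i, Measurable (d i))
    (hu_meas : ∀ i, Measurable (u i)) (hv_meas : ∀ i, Measurable (v i))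
    (hg_nonneg : ∀ i x, 0 ≤ g i x) (hd_nonneg : ∀ i x, 0 ≤ d i x)
    (hg_bdd : ∃ C : ℝ, ∀ i x, g i x ≤ C) (hd_bdd : ∃ C : ℝ, ∀ i x, d i x ≤ C)
    (hu_mem : ∀ i x, u i x ∈ Set.Icc (0 : ℝ) 1)
    (hv_mem : ∀ i x, v i x ∈ Set.Icc (0 : ℝ) 1)
    (hu_sum : ∀ x, (∑ i, u i x) ≤ (N : ℝ) / 2)
    (hv_sum : ∀ x, (∑ i, v i x) ≤ 1)
    (h_reg : ∀ i x, α * (1 - u i x) ≤ g i x)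
    (h_info : ∀ i x, d i x ≤ β * v i x + δ)
    (p : Measure X) [IsProbabilityMeasure p] :
    ∃ i : Fin N, α / 2 - γ * (β / (N : ℝ) + δ) ≤ ∫ x, (g i x - γ * d i x) ∂p := by
  obtain ⟨Cg, hCg⟩ := hg_bdd
  obtain ⟨Cd, hCd⟩ := hd_bdd
  have hNpos : (0:ℝ) < N := by positivity
  have hint_g : ∀ i, Integrable (g i) p := by
    intro i
    refine (integrable_const Cg).mono' (hg_meas i).aestronglyMeasurable ?_
    filter_upwards with x
    rw [Real.norm_eq_abs, abs_of_nonneg (hg_nonneg i x)]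
    exact hCg i x
  have hint_d : ∀ i, Integrable (d i) p := by
    intro i
    refine (integrable_const Cd).mono' (hd_meas i).aestronglyMeasurable ?_
    filter_upwards with x
    rw [Real.norm_eq_abs, abs_of_nonneg (hd_nonneg i x)]
    exact hCd i x
  have hint : ∀ i, Integrable (fun x => g i x - γ * d i x) p := fun i =>
    (hint_g i).sub ((hint_d i).const_mul γ)
  -- pointwise lower bound on the sum
  have hpt : ∀ x, (N:ℝ) * α / 2 - γ * (β + N * δ) ≤ ∑ i, (g i x - γ * d i x) := by
    intro x
    have h1 : (N:ℝ) * α / 2 ≤ ∑ i, g i x := by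
      have : ∑ i, α * (1 - u i x) ≤ ∑ i, g i x :=
        Finset.sum_le_sum fun i _ => h_reg i x
      calc (N:ℝ) * α / 2 = α * ((N:ℝ) - (N:ℝ)/2) := by ring
        _ ≤ α * ((N:ℝ) - ∑ i, u i x) := by
            apply mul_le_mul_of_nonneg_left _ hα
            linarith [hu_sum x]
        _ = ∑ i, α * (1 - u i x) := by
            simp [Finset.mul_sum, mul_sub, Finset.sum_sub_distrib]; ring
        _ ≤ ∑ i, g i x := this
    have h2 : ∑ i, d i x ≤ β + N * δ := by
      calc ∑ i, d i x ≤ ∑ i, (β * v i x + δ) :=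
            Finset.sum_le_sum fun i _ => h_info i x
        _ = β * (∑ i, v i x) + N * δ := by
            simp [Finset.sum_add_distrib, Finset.mul_sum, mul_comm]
        _ ≤ β * 1 + N * δ := by
            have := hv_sum x
            nlinarith
        _ = β + N * δ := by ring
    have : ∑ i, (g i x - γ * d i x) = (∑ i, g i x) - γ * ∑ i, d i x := by
      rw [Finset.sum_sub_distrib, Finset.mul_sum]
    rw [this]
    have := mul_le_mul_of_nonneg_left h2 hγ.le
    linarith
  -- integrate the bound
  have hsum_int : (N:ℝ) * α / 2 - γ * (β + N * δ) ≤ ∑ i, ∫ x, (g i x - γ * d i x) ∂p := by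
    rw [← integral_finset_sum _ (fun i _ => hint i)]
    calc (N:ℝ) * α / 2 - γ * (β + N * δ)
        = ∫ _ : X, ((N:ℝ) * α / 2 - γ * (β + N * δ)) ∂p := by simp
      _ ≤ ∫ x, ∑ i, (g i x - γ * d i x) ∂p := by
          apply integral_mono (integrable_const _)
            (integrable_finset_sum _ fun i _ => hint i)
          exact hpt
  -- extract an index
  by_contra hcon
  push_neg at hcon
  have hlt : ∑ i, ∫ x, (g i x - γ * d i x) ∂p
      < ∑ _i : Fin N, (α / 2 - γ * (β / (N : ℝ) + δ)) := by
    apply Finset.sum_lt_sum_of_nonempty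
    · exact Finset.univ_nonempty_iff.mpr ⟨⟨0, by omega⟩⟩
    · intro i _; exact hcon i
  simp only [Finset.sum_const, Finset.card_univ, Fintype.card_fin, nsmul_eq_mul] at hlt
  have : (N:ℝ) * (α / 2 - γ * (β / N + δ)) = (N:ℝ) * α / 2 - γ * (β + N * δ) := by
    field_simp
  rw [this] at hlt
  linarith
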